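/- For n ≥ 2 and ω = exp(2πi/n), (1/n) · Σ_{α=1}^{n-1} ω^{-α} (1 + ω^α)/(1 - ω^α) = (n-2)/n. -/
import Mathlib

/-- Lemma 2.18 (formula f180): for n ≥ 2, ω = exp(2πi/n),
(1/n) Σ_{α=1}^{n-1} ω^{-α} (1+ω^α)/(1-ω^α) = (n-2)/n. -/
theorem qGD_sum_omega_inv_q0 (n : ℕ) (hn : 2 ≤ n) :
    (1 / (n : ℂ)) * ∑ α ∈ Finset.Ico 1 n,
      Complex.exp (2 * Real.pi * Complex.I / n) ^ (-(α : ℤ)) *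
        ((1 + Complex.exp (2 * Real.pi * Complex.I / n) ^ α) /
          (1 - Complex.exp (2 * Real.pi * Complex.I / n) ^ α))
      = ((n : ℂ) - 2) / (n : ℂ) := by
  set ω : ℂ := Complex.exp (2 * Real.pi * Complex.I / n) with hωdef
  have hn0 : (n : ℂ) ≠ 0 := by
    exact_mod_cast Nat.cast_ne_zero.mpr (by omega)
  have hω : IsPrimitiveRoot ω n := by
    have := Complex.isPrimitiveRoot_exp n (by omega)
    simpa [hωdef, mul_comm] using this
  have hω0 : ω ≠ 0 := Complex.exp_ne_zero _
  have hωn : ω ^ n = 1 := hω.pow_eq_one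
  have hne : ∀ α ∈ Finset.Ico 1 n, ω ^ α ≠ 1 := by
    intro α hα
    rw [Finset.mem_Ico] at hα
    exact hω.pow_ne_one_of_pos_of_lt (by omega) hα.2
  -- rewrite summand
  have hsummand : ∀ α ∈ Finset.Ico 1 n,
      ω ^ (-(α : ℤ)) * ((1 + ω ^ α) / (1 - ω ^ α))
        = (ω⁻¹) ^ α + 2 * (1 / (1 - ω ^ α)) := by
    intro α hα
    have h1 : ω ^ α ≠ 1 := hne α hα
    have h2 : (1 : ℂ) - ω ^ α ≠ 0 := sub_ne_zero.mpr (Ne.symm h1)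
    have h0 : ω ^ α ≠ 0 := pow_ne_zero _ hω0
    rw [zpow_neg, zpow_natCast, inv_pow]
    field_simp
    ring
  rw [Finset.sum_congr rfl hsummand, Finset.sum_add_distrib, ← Finset.mul_sum]
  -- geometric part
  have hgeom : ∑ α ∈ Finset.Ico 1 n, (ω⁻¹) ^ α = -1 := by
    have hinv1 : ω⁻¹ ≠ 1 := by
      intro h
      exact hω.ne_one (by omega) (by rw [← inv_inv ω, h, inv_one])
    have hinvn : (ω⁻¹) ^ n = 1 := by rw [inv_pow, hωn, inv_one]
    have hr : ∑ α ∈ Finset.range n, (ω⁻¹) ^ α = 0 := by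
      rw [geom_sum_eq hinv1, hinvn]
      simp
    have := Finset.sum_eq_sum_Ico_succ_bot (show 0 < n by omega)
      (fun α => (ω⁻¹) ^ α)
    rw [Finset.range_eq_Ico, this] at hr
    simp only [inv_pow] at hr ⊢
    simp at hr
    linear_combination hr
  rw [hgeom]
  -- pairing part
  set S : ℂ := ∑ α ∈ Finset.Ico 1 n, (1 / (1 - ω ^ α)) with hS
  have hpair : S = (n - 1 : ℂ) / 2 := by
    have hrefl : S = ∑ α ∈ Finset.Ico 1 n, (1 / (1 - ω ^ (n - α))) := by
      rw [hS]
      apply Finset.sum_nbij' (fun α => n - α) (fun α => n - α)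
      · intro a ha; rw [Finset.mem_Ico] at *; omega
      · intro a ha; rw [Finset.mem_Ico] at *; omega
      · intro a ha; rw [Finset.mem_Ico] at ha; omega
      · intro a ha; rw [Finset.mem_Ico] at ha; omega
      · intro a ha
        rw [Finset.mem_Ico] at ha
        congr 3
        omega
    have h2S : S + S = (n - 1 : ℂ) := by
      nth_rewrite 2 [hrefl]
      rw [hS, ← Finset.sum_add_distrib]
      have : ∀ α ∈ Finset.Ico 1 n,
          (1 / (1 - ω ^ α) + 1 / (1 - ω ^ (n - α))) = 1 := by
        intro α hα
        rw [Finset.mem_Ico] at hα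
        have hαn : α ≤ n := by omega
        have hz : ω ^ (n - α) = (ω ^ α)⁻¹ := by
          rw [pow_sub₀ _ hω0 hαn, hωn]
          simp
        have h1 : ω ^ α ≠ 1 := hne α (by rw [Finset.mem_Ico]; omega)
        have h0 : ω ^ α ≠ 0 := pow_ne_zero _ hω0
        have h2 : (1 : ℂ) - ω ^ α ≠ 0 := sub_ne_zero.mpr (Ne.symm h1)
        have h2' : (1 : ℂ) - (ω ^ α)⁻¹ ≠ 0 := by
          rw [sub_ne_zero]
          intro h
          exact h1 (by rw [← inv_inv (ω ^ α), ← h, inv_one])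
        rw [hz]
        have key : ∀ z : ℂ, z ≠ 0 → (1:ℂ) - z ≠ 0 → 1 - z⁻¹ ≠ 0 →
            1 / (1 - z) + 1 / (1 - z⁻¹) = 1 := by
          intro z hz0 hz1 hz2
          rw [div_add_div _ _ hz1 hz2, div_eq_one_iff_eq (mul_ne_zero hz1 hz2)]
          field_simp
          ring
        exact key _ h0 h2 h2'
      rw [Finset.sum_congr rfl this, Finset.sum_const, Nat.card_Ico,
        nsmul_eq_mul, mul_one, Nat.cast_sub (by omega : 1 ≤ n), Nat.cast_one]
    linear_combination h2S / 2
  rw [hpair]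
  field_simp
  ring
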